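/- For every n ∈ ℕ there exists a piecewise-linear periodic function f with exactly two pieces, a real number α, and N ∈ ℕ such that |G_{f,α,N}| > n. Concretely: choose an even natural number N > 4 with n < N/2 - 1, choose 0 < ε < 2/(N-4), define f on [0,1) by f(x) = x for 0 ≤ x ≤ 1/2 and f(x) = (1+ε)x - (1+ε)/2 for 1/2 < x < 1, extend periodically with period 1, and set α = 1/N; then |G_{f,α,N}| > n. -/

import Mathlib

/-- The set of distinct values `f (d*α + β)` for `1 ≤ d ≤ N`. -/
def orbitSet (f : ℝ → ℝ) (α β : ℝ) (N : ℕ) : Set ℝ :=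
  {y | ∃ d : ℕ, 1 ≤ d ∧ d ≤ N ∧ y = f (d * α + β)}

/-- Gaps between consecutive (nearest-neighbor) elements of a set of reals. -/
def consGaps (S : Set ℝ) : Set ℝ :=
  {g | ∃ a ∈ S, ∃ b ∈ S, a < b ∧ (∀ x ∈ S, x ≤ a ∨ b ≤ x) ∧ g = b - a}

/-- The gap length set `G_{f,α,β,N}`: consecutive gaps together with the
extremal gap `s₁ - inf f + sup f - s_n`. -/
def gapSet (f : ℝ → ℝ) (α β : ℝ) (N : ℕ) : Set ℝ :=
  consGaps (orbitSet f α β N) ∪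
    {sInf (orbitSet f α β N) - sInf (Set.range f) + sSup (Set.range f) -
      sSup (orbitSet f α β N)}

/-- The two-piece sawtooth function. -/
noncomputable def myF (ε : ℝ) : ℝ → ℝ := fun x =>
  if Int.fract x ≤ 1/2 then Int.fract x else (1+ε)*Int.fract x - (1+ε)/2

lemma myF_periodic (ε : ℝ) : ∀ x, myF ε (x+1) = myF ε x := by
  intro x; simp [myF, Int.fract_add_one]

lemma myF_left (ε : ℝ) : ∀ x ∈ Set.Icc (0:ℝ) (1/2), myF ε x = x := by
  intro x hx
  have h1 : Int.fract x = x := Int.fract_eq_self.mpr ⟨hx.1, by linarith [hx.2]⟩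
  simp only [myF, h1, if_pos hx.2]

lemma myF_right (ε : ℝ) : ∀ x ∈ Set.Ioo (1/2:ℝ) 1, myF ε x = (1+ε)*x - (1+ε)/2 := by
  intro x hx
  have h1 : Int.fract x = x := Int.fract_eq_self.mpr ⟨by linarith [hx.1], hx.2⟩
  simp only [myF, h1, if_neg (not_le.mpr hx.1)]

/-- For every `n` there is a piecewise-linear periodic function with two
pieces whose gap length set exceeds `n` in cardinality for suitable `α, N`. -/
theorem two_piece_unbounded_gaps (n : ℕ) :
    ∃ (f : ℝ → ℝ) (α : ℝ) (N : ℕ) (ε : ℝ), 0 < ε ∧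
      (∀ x, f (x + 1) = f x) ∧
      (∀ x ∈ Set.Icc (0 : ℝ) (1 / 2), f x = x) ∧
      (∀ x ∈ Set.Ioo (1 / 2 : ℝ) 1, f x = (1 + ε) * x - (1 + ε) / 2) ∧
      n < (gapSet f α 0 N).ncard := by
  have hc : (0:ℝ) < 2*(n:ℝ)+4 := by positivity
  set c : ℝ := 2*(n:ℝ)+4 with hcdef
  set ε : ℝ := 1/c with hεdef
  have hε : 0 < ε := by positivity
  set f : ℝ → ℝ := myF ε with hfdef
  refine ⟨f, 1/c, 2*n+4, ε, hε, myF_periodic ε, myF_left ε, myF_right ε, ?_⟩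
  set N : ℕ := 2*n+4 with hNdef
  have hNc : ((N:ℕ):ℝ) = c := by rw [hNdef, hcdef]; push_cast; ring
  set S : Set ℝ := orbitSet f (1/c) 0 N with hSdef
  -- values of f on the orbit
  have hval1 : ∀ d : ℕ, d ≤ n+2 → f ((d:ℝ)*(1/c) + 0) = (d:ℝ)/c := by
    intro d hd
    have hx : (d:ℝ)*(1/c) + 0 = (d:ℝ)/c := by ring
    rw [hx]
    apply myF_left
    constructor
    · positivity
    · rw [div_le_div_iff₀ hc (by norm_num)]
      have : (d:ℝ) ≤ (n:ℝ)+2 := by exact_mod_cast hd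
      rw [hcdef]; linarith
  have hval2 : ∀ d : ℕ, n+3 ≤ d → d ≤ 2*n+3 →
      f ((d:ℝ)*(1/c) + 0) = (1+ε)*(((d:ℝ)-((n:ℝ)+2))/c) := by
    intro d hd1 hd2
    have hx : (d:ℝ)*(1/c) + 0 = (d:ℝ)/c := by ring
    have hdl : (n:ℝ)+3 ≤ (d:ℝ) := by exact_mod_cast hd1
    have hdu : (d:ℝ) ≤ 2*(n:ℝ)+3 := by exact_mod_cast hd2
    rw [hx, hfdef, myF_right ε _ ⟨?_, ?_⟩]
    · rw [hcdef]; field_simp; ring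
    · rw [lt_div_iff₀ hc, hcdef]; linarith
    · rw [div_lt_one hc, hcdef]; linarith
  have hval3 : f ((N:ℝ)*(1/c) + 0) = 0 := by
    have hx : ((N:ℕ):ℝ)*(1/c) + 0 = 1 := by
      rw [hNc]; field_simp; norm_num
    rw [hx]
    simp [hfdef, myF, Int.fract_one]
  -- the gaps k*ε/c belong to consGaps S
  have hgap : ∀ k : ℕ, 1 ≤ k → k ≤ n+1 → ε*(k:ℝ)/c ∈ consGaps S := by
    intro k hk1 hk2
    have hkr1 : (1:ℝ) ≤ (k:ℝ) := by exact_mod_cast hk1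
    have hkr2 : (k:ℝ) ≤ (n:ℝ)+1 := by exact_mod_cast hk2
    have hkc : (k:ℝ) ≤ c := by rw [hcdef]; linarith
    have hεk : ε*(k:ℝ) ≤ 1 := by
      rw [hεdef]
      rw [div_mul_eq_mul_div, div_le_one hc]; linarith
    refine ⟨(k:ℝ)/c, ?_, (1+ε)*((k:ℝ)/c), ?_, ?_, ?_, ?_⟩
    · exact ⟨k, hk1, by omega, (hval1 k (by omega)).symm⟩
    · refine ⟨k + (n+2), by omega, by omega, ?_⟩
      rw [hval2 (k+(n+2)) (by omega) (by omega)]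
      push_cast
      try ring_nf
      try ring
    · have : 0 < ε*((k:ℝ)/c) := by positivity
      nlinarith
    · rintro x ⟨d, hd1, hd2, rfl⟩
      by_cases hA : d ≤ n+2
      · rw [hval1 d hA]
        by_cases hB : d ≤ k
        · left
          have hdkr : (d:ℝ) ≤ (k:ℝ) := by exact_mod_cast hB
          gcongr
        · right
          have hdk : (k:ℝ)+1 ≤ (d:ℝ) := by exact_mod_cast by omega
          rw [mul_div_assoc'] at *
          rw [div_le_div_iff₀ hc hc]
          nlinarith
      · by_cases hB : d ≤ 2*n+3
        · rw [hval2 d (by omega) hB]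
          set j : ℝ := (d:ℝ) - ((n:ℝ)+2) with hjdef
          have hj1 : (1:ℝ) ≤ j := by
            have : (n:ℝ)+3 ≤ (d:ℝ) := by exact_mod_cast (by omega : n+3 ≤ d)
            rw [hjdef]; linarith
          have hj2 : j ≤ (n:ℝ)+1 := by
            have : (d:ℝ) ≤ 2*(n:ℝ)+3 := by exact_mod_cast hB
            rw [hjdef]; linarith
          have hεj : ε*j ≤ 1 := by
            rw [hεdef, div_mul_eq_mul_div, div_le_one hc, hcdef]; linarith
          by_cases hC : d ≤ k + n + 1
          · left
            have hjk : j ≤ (k:ℝ)-1 := by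
              have : (d:ℝ) ≤ (k:ℝ)+(n:ℝ)+1 := by exact_mod_cast hC
              rw [hjdef]; linarith
            rw [mul_div_assoc', div_le_div_iff₀ hc hc]
            nlinarith
          · right
            have hjk : (k:ℝ) ≤ j := by
              have : (k:ℝ)+(n:ℝ)+2 ≤ (d:ℝ) := by exact_mod_cast (by omega : k+n+2 ≤ d)
              rw [hjdef]; linarith
            have h1ε : (0:ℝ) ≤ 1+ε := by linarith
            gcongr
        · have hdN : d = N := by omega
          rw [hdN, hval3]
          left; positivity
    · ring
  -- finiteness
  have hSfin : S.Finite := by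
    apply Set.Finite.subset (Set.Finite.image (fun d : ℕ => f ((d:ℝ)*(1/c) + 0)) (Set.finite_Icc 1 N))
    rintro y ⟨d, h1, h2, rfl⟩
    exact ⟨d, ⟨h1, h2⟩, rfl⟩
  have hCfin : (consGaps S).Finite := by
    apply Set.Finite.subset (Set.Finite.image2 (fun a b => b - a) hSfin hSfin)
    rintro g ⟨a, ha, b, hb, _, _, rfl⟩
    exact ⟨a, ha, b, hb, rfl⟩
  have hGfin : (gapSet f (1/c) 0 N).Finite := by
    unfold gapSet
    exact Set.Finite.union hCfin (Set.finite_singleton _)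
  -- the image set of gaps
  set T : Set ℝ := (fun k : ℕ => ε*(k:ℝ)/c) '' (Set.Icc 1 (n+1)) with hTdef
  have hinj : Function.Injective (fun k : ℕ => ε*(k:ℝ)/c) := by
    intro a b h
    simp only at h
    have h2 := congrArg (· * c) h
    simp only [div_mul_cancel₀ _ hc.ne'] at h2
    have h3 : (a:ℝ) = b := mul_left_cancel₀ hε.ne' h2
    exact_mod_cast h3
  have hTcard : T.ncard = n+1 := by
    rw [hTdef, Set.ncard_image_of_injective _ hinj, ← Finset.coe_Icc,
      Set.ncard_coe_finset, Nat.card_Icc]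
    omega
  have hTsub : T ⊆ gapSet f (1/c) 0 N := by
    rintro g ⟨k, hk, rfl⟩
    exact Or.inl (hgap k hk.1 hk.2)
  have hle : T.ncard ≤ (gapSet f (1/c) 0 N).ncard := Set.ncard_le_ncard hTsub hGfin
  omega
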